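/- arXiv:2308.03812 — 4 statements merged into one kernel-verified Lean document; each statement's English description precedes it below -/
import Mathlib

section
/- Let φ ∈ S(ℝ). Then the sup-norm closure of N¹_φ(ℝ) is contained in S(ℝ). If moreover lim_{x→−∞} φ(x) ≠ lim_{x→∞} φ(x), then the sup-norm closure of N¹_φ(ℝ) equals S(ℝ). -/
open Filter Topology MeasureTheory

noncomputable section

/-- Closure of a set of real-valued functions with respect to the supremum
norm over the whole domain (global uniform convergence). -/
def UnifClosure {α : Type*} (S : Set (α → ℝ)) : Set (α → ℝ) :=
  {f | ∀ ε : ℝ, 0 < ε → ∃ g ∈ S, ∀ x, |f x - g x| ≤ ε}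

/-- `N¹_φ(ℝ)`: the linear span of the functions `x ↦ φ(a x + b)`. -/
def N1R (φ : ℝ → ℝ) : Set (ℝ → ℝ) :=
  ↑(Submodule.span ℝ {f : ℝ → ℝ | ∃ a b : ℝ, f = fun x => φ (a * x + b)})

/-- `C₀(ℝ)`: continuous real-valued functions on `ℝ` vanishing at infinity. -/
def C0R : Set (ℝ → ℝ) :=
  {f | Continuous f ∧ Tendsto f (cocompact ℝ) (𝓝 0)}

/-- `S(ℝ)`: continuous functions `ℝ → ℝ` with finite limits at both `−∞`
and `∞`. -/
def SR : Set (ℝ → ℝ) :=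
  {f | Continuous f ∧ (∃ L : ℝ, Tendsto f atBot (𝓝 L)) ∧
    (∃ L : ℝ, Tendsto f atTop (𝓝 L))}

/-- SR as a submodule. -/
def SRsub : Submodule ℝ (ℝ → ℝ) where
  carrier := SR
  add_mem' := by
    rintro f g ⟨hf, ⟨A, hA⟩, ⟨B, hB⟩⟩ ⟨hg, ⟨A', hA'⟩, ⟨B', hB'⟩⟩
    exact ⟨hf.add hg, ⟨A + A', hA.add hA'⟩, ⟨B + B', hB.add hB'⟩⟩
  zero_mem' := ⟨continuous_const, ⟨0, tendsto_const_nhds⟩, ⟨0, tendsto_const_nhds⟩⟩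
  smul_mem' := by
    rintro c f ⟨hf, ⟨A, hA⟩, ⟨B, hB⟩⟩
    exact ⟨hf.const_smul c, ⟨c * A, (hA.const_mul c)⟩, ⟨c * B, (hB.const_mul c)⟩⟩

lemma gen_mem_SR {φ : ℝ → ℝ} (hφ : φ ∈ SR) (a b : ℝ) :
    (fun x => φ (a * x + b)) ∈ SR := by
  obtain ⟨hc, ⟨A, hA⟩, ⟨B, hB⟩⟩ := hφ
  have hcont : Continuous fun x : ℝ => φ (a * x + b) :=
    hc.comp (by continuity)
  rcases lt_trichotomy a 0 with ha | ha | ha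
  · have h1 : Tendsto (fun x : ℝ => a * x + b) atTop atBot :=
      tendsto_atBot_add_const_right _ b ((tendsto_const_mul_atBot_of_neg ha).mpr tendsto_id)
    have h2 : Tendsto (fun x : ℝ => a * x + b) atBot atTop :=
      tendsto_atTop_add_const_right _ b ((tendsto_const_mul_atTop_of_neg ha).mpr tendsto_id)
    exact ⟨hcont, ⟨B, hB.comp h2⟩, ⟨A, hA.comp h1⟩⟩
  · subst ha
    simp only [zero_mul, zero_add]
    exact ⟨continuous_const, ⟨φ b, tendsto_const_nhds⟩, ⟨φ b, tendsto_const_nhds⟩⟩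
  · have h1 : Tendsto (fun x : ℝ => a * x + b) atTop atTop :=
      tendsto_atTop_add_const_right _ b (tendsto_id.const_mul_atTop ha)
    have h2 : Tendsto (fun x : ℝ => a * x + b) atBot atBot :=
      tendsto_atBot_add_const_right _ b (tendsto_id.const_mul_atBot ha)
    exact ⟨hcont, ⟨A, hA.comp h2⟩, ⟨B, hB.comp h1⟩⟩

lemma N1R_subset_SR {φ : ℝ → ℝ} (hφ : φ ∈ SR) : N1R φ ⊆ SR := by
  intro f hf
  have : f ∈ SRsub := by
    apply Submodule.span_le.mpr _ hf
    rintro g ⟨a, b, rfl⟩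
    exact gen_mem_SR hφ a b
  exact this

lemma SR_closed {f : ℝ → ℝ}
    (h : ∀ ε : ℝ, 0 < ε → ∃ g ∈ SR, ∀ x, |f x - g x| ≤ ε) : f ∈ SR := by
  -- continuity
  have hcont : Continuous f := by
    choose g hg hfg using fun n : ℕ => h (1 / (n + 1)) (by positivity)
    have hTU : TendstoUniformly (fun n x => g n x) f atTop := by
      rw [Metric.tendstoUniformly_iff]
      intro ε hε
      obtain ⟨N, hN⟩ := exists_nat_gt (1 / ε)
      filter_upwards [eventually_ge_atTop N] with n hn x
      have h1 : (1 : ℝ) / (n + 1) < ε := by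
        rw [div_lt_iff₀ (by positivity)]
        have : 1 / ε < (n : ℝ) + 1 := lt_of_lt_of_le hN (by exact_mod_cast Nat.le_succ_of_le hn)
        rw [div_lt_iff₀ hε] at this
        linarith [this]
      calc dist (f x) (g n x) = |f x - g n x| := by rw [Real.dist_eq]
        _ ≤ 1 / (n + 1) := hfg n x
        _ < ε := h1
    exact hTU.continuous (Eventually.of_forall fun n => (hg n).1).frequently
  -- limits via Cauchy
  have key : ∀ l : Filter ℝ, l.NeBot →
      (∀ g ∈ SR, ∃ L : ℝ, Tendsto g l (𝓝 L)) → ∃ L : ℝ, Tendsto f l (𝓝 L) := by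
    intro l hne hlim
    have : Cauchy (map f l) := by
      rw [Metric.cauchy_iff]
      constructor
      · exact map_neBot
      · intro ε hε
        obtain ⟨g, hg, hfg⟩ := h (ε / 4) (by positivity)
        obtain ⟨L, hL⟩ := hlim g hg
        have hev : ∀ᶠ x in l, |g x - L| < ε / 4 := by
          have := Metric.tendsto_nhds.mp hL (ε / 4) (by positivity)
          simpa [Real.dist_eq] using this
        refine ⟨f '' {x | |g x - L| < ε / 4}, image_mem_map hev, ?_⟩
        rintro _ ⟨x, hx, rfl⟩ _ ⟨y, hy, rfl⟩
        have h1 := hfg x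
        have h2 := hfg y
        rw [Real.dist_eq]
        have : |f x - f y| ≤ |f x - g x| + |g x - L| + |L - g y| + |g y - f y| := by
          have := abs_sub_abs_le_abs_sub (f x) (f y)
          calc |f x - f y| = |(f x - g x) + (g x - L) + (L - g y) + (g y - f y)| := by ring_nf
            _ ≤ |f x - g x| + |g x - L| + |L - g y| + |g y - f y| := by
                exact (abs_add_le _ _).trans (by gcongr <;> exact (abs_add_le _ _).trans (by gcongr; exact abs_add_le _ _))
        have h3 : |L - g y| < ε/4 := by rw [abs_sub_comm]; exact hy
        have h4 : |g y - f y| ≤ ε/4 := by rw [abs_sub_comm]; exact hfg y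
        calc |f x - f y| ≤ |f x - g x| + |g x - L| + |L - g y| + |g y - f y| := this
          _ < ε := by
              have hx' : |g x - L| < ε / 4 := hx
              linarith [hfg x]
    exact cauchy_map_iff_exists_tendsto.mp this
  refine ⟨hcont, ?_, ?_⟩
  · exact key atBot inferInstance (fun g hg => hg.2.1)
  · exact key atTop inferInstance (fun g hg => hg.2.2)

lemma closure_subset_SR {φ : ℝ → ℝ} (hφ : φ ∈ SR) : UnifClosure (N1R φ) ⊆ SR := by
  intro f hf
  apply SR_closed
  intro ε hε
  obtain ⟨g, hg, hfg⟩ := hf ε hε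
  exact ⟨g, N1R_subset_SR hφ hg, hfg⟩

lemma SR_bounded {f : ℝ → ℝ} (hf : f ∈ SR) : ∃ M : ℝ, 1 ≤ M ∧ ∀ x, |f x| ≤ M := by
  obtain ⟨hc, ⟨A, hA⟩, ⟨B, hB⟩⟩ := hf
  have h1 : ∀ᶠ x in atBot, |f x - A| < 1 := by
    simpa [Real.dist_eq] using Metric.tendsto_nhds.mp hA 1 one_pos
  have h2 : ∀ᶠ x in atTop, |f x - B| < 1 := by
    simpa [Real.dist_eq] using Metric.tendsto_nhds.mp hB 1 one_pos
  obtain ⟨N1, hN1⟩ := eventually_atBot.mp h1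
  obtain ⟨N2, hN2⟩ := eventually_atTop.mp h2
  obtain ⟨C, hC⟩ := (isCompact_Icc (a := N1) (b := N2)).exists_bound_of_continuousOn
    hc.continuousOn
  refine ⟨max (max (|A| + 1) (|B| + 1)) (max C 1), le_max_of_le_right (le_max_right _ _), ?_⟩
  intro x
  rcases le_or_gt x N1 with h | h
  · have := hN1 x h
    have : |f x| ≤ |A| + 1 := by
      calc |f x| = |(f x - A) + A| := by ring_nf
        _ ≤ |f x - A| + |A| := abs_add_le _ _
        _ ≤ |A| + 1 := by linarith
    exact le_trans this (le_max_of_le_left (le_max_left _ _))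
  rcases le_or_gt N2 x with h' | h'
  · have := hN2 x h'
    have : |f x| ≤ |B| + 1 := by
      calc |f x| = |(f x - B) + B| := by ring_nf
        _ ≤ |f x - B| + |B| := abs_add_le _ _
        _ ≤ |B| + 1 := by linarith
    exact le_trans this (le_max_of_le_left (le_max_right _ _))
  · have hx : x ∈ Set.Icc N1 N2 := ⟨le_of_lt h, le_of_lt h'⟩
    have := hC x hx
    rw [Real.norm_eq_abs] at this
    exact le_trans this (le_max_of_le_right (le_max_left _ _))

section Span
variable (φ : ℝ → ℝ)

def Sp : Submodule ℝ (ℝ → ℝ) :=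
  Submodule.span ℝ {f : ℝ → ℝ | ∃ a b : ℝ, f = fun x => φ (a * x + b)}

variable {φ}

lemma const_mem_Sp {L₁ L₂ : ℝ} (hL₁ : Tendsto φ atBot (𝓝 L₁))
    (hL₂ : Tendsto φ atTop (𝓝 L₂)) (h12 : L₁ ≠ L₂) (c : ℝ) :
    (fun _ : ℝ => c) ∈ Sp φ := by
  have hb : ∃ b : ℝ, φ b ≠ 0 := by
    by_contra hcon
    push_neg at hcon
    have hz : φ = fun _ => (0 : ℝ) := funext hcon
    rw [hz] at hL₁ hL₂
    have e1 : L₁ = 0 := tendsto_nhds_unique hL₁ tendsto_const_nhds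
    have e2 : L₂ = 0 := tendsto_nhds_unique hL₂ tendsto_const_nhds
    exact h12 (e1.trans e2.symm)
  obtain ⟨b₀, hb₀⟩ := hb
  have hmem : (fun x : ℝ => φ (0 * x + b₀)) ∈ Sp φ :=
    Submodule.subset_span ⟨0, b₀, rfl⟩
  have := Submodule.smul_mem (Sp φ) (c / φ b₀) hmem
  convert this using 1
  funext x
  simp only [Pi.smul_apply, smul_eq_mul, zero_mul, zero_add]
  field_simp

lemma psiaff_mem_Sp {L₁ L₂ : ℝ} (hL₁ : Tendsto φ atBot (𝓝 L₁))
    (hL₂ : Tendsto φ atTop (𝓝 L₂)) (h12 : L₁ ≠ L₂) (c a b : ℝ) :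
    (fun x : ℝ => c * ((φ (a * x + b) - L₁) / (L₂ - L₁))) ∈ Sp φ := by
  have hne : L₂ - L₁ ≠ 0 := sub_ne_zero.mpr (Ne.symm h12)
  have hgen : (fun x : ℝ => φ (a * x + b)) ∈ Sp φ := Submodule.subset_span ⟨a, b, rfl⟩
  have h1 := Submodule.smul_mem (Sp φ) (c / (L₂ - L₁)) hgen
  have h2 := const_mem_Sp hL₁ hL₂ h12 (-(c * L₁) / (L₂ - L₁))
  have := Submodule.add_mem (Sp φ) h1 h2
  convert this using 1
  funext x
  simp only [Pi.add_apply, Pi.smul_apply, smul_eq_mul]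
  field_simp
  ring

end Span

lemma sum_indicator_eq (c : ℕ → ℝ) (n j : ℕ) :
    ∑ i ∈ Finset.range n, (if i < j then c i else 0) = ∑ i ∈ Finset.range (min j n), c i := by
  rw [← Finset.sum_filter]
  congr 1
  ext k
  simp only [Finset.mem_filter, Finset.mem_range, Nat.lt_min]
  omega

set_option maxHeartbeats 2000000 in
lemma dense_step {φ : ℝ → ℝ} {L₁ L₂ : ℝ} (hL₁ : Tendsto φ atBot (𝓝 L₁))
    (hL₂ : Tendsto φ atTop (𝓝 L₂)) (h12 : L₁ ≠ L₂) (hφ : φ ∈ SR)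
    {f : ℝ → ℝ} (hf : f ∈ SR) :
    ∀ ε : ℝ, 0 < ε → ∃ g ∈ N1R φ, ∀ x, |f x - g x| ≤ ε := by
  intro ε hε
  obtain ⟨hfc, ⟨A, hA⟩, ⟨B, hB⟩⟩ := hf
  have hne : L₂ - L₁ ≠ 0 := sub_ne_zero.mpr (Ne.symm h12)
  set ψ : ℝ → ℝ := fun y => (φ y - L₁) / (L₂ - L₁) with hψdef
  have hψ0 : Tendsto ψ atBot (𝓝 0) := by
    have := (hL₁.sub_const L₁).div_const (L₂ - L₁)
    simpa using this
  have hψ1 : Tendsto ψ atTop (𝓝 1) := by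
    have := (hL₂.sub_const L₁).div_const (L₂ - L₁)
    simpa [div_self hne] using this
  have hψSR : ψ ∈ SR :=
    ⟨(hφ.1.sub continuous_const).div_const _, ⟨0, hψ0⟩, ⟨1, hψ1⟩⟩
  obtain ⟨M, hM1, hM⟩ := SR_bounded hψSR
  set ε₀ : ℝ := ε / (M + 3) with hε₀def
  have hε₀ : 0 < ε₀ := by positivity
  -- tails of f
  have hAev : ∀ᶠ x in atBot, |f x - A| < ε₀ / 2 := by
    simpa [Real.dist_eq] using Metric.tendsto_nhds.mp hA (ε₀ / 2) (by positivity)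
  have hBev : ∀ᶠ x in atTop, |f x - B| < ε₀ / 2 := by
    simpa [Real.dist_eq] using Metric.tendsto_nhds.mp hB (ε₀ / 2) (by positivity)
  obtain ⟨N1, hN1⟩ := eventually_atBot.mp hAev
  obtain ⟨N2, hN2⟩ := eventually_atTop.mp hBev
  set R : ℝ := max (max |N1| |N2|) 1 with hRdef
  have hR1 : (1 : ℝ) ≤ R := le_max_right _ _
  have hR0 : (0 : ℝ) < R := lt_of_lt_of_le one_pos hR1
  have htailA : ∀ x ≤ -R, |f x - A| < ε₀ / 2 := by
    intro x hx
    apply hN1 x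
    have h1 : -R ≤ -|N1| := neg_le_neg (le_max_of_le_left (le_max_left _ _))
    have h2 : -|N1| ≤ N1 := neg_abs_le N1
    linarith
  have htailB : ∀ x, R ≤ x → |f x - B| < ε₀ / 2 := by
    intro x hx
    apply hN2 x
    have h1 : N2 ≤ |N2| := le_abs_self N2
    have h2 : |N2| ≤ R := le_max_of_le_left (le_max_right _ _)
    linarith
  -- uniform continuity on [-R, R]
  obtain ⟨δ, hδ0, hδ⟩ := Metric.uniformContinuousOn_iff.mp
    ((isCompact_Icc (a := -R) (b := R)).uniformContinuousOn_of_continuous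
      hfc.continuousOn) ε₀ hε₀
  -- choose n
  obtain ⟨n, hn⟩ := exists_nat_gt (2 * R / δ)
  have hnpos : 0 < (n : ℝ) := lt_of_le_of_lt (by positivity) hn
  have hn0 : (n : ℝ) ≠ 0 := ne_of_gt hnpos
  set h : ℝ := 2 * R / n with hhdef
  have hh0 : 0 < h := by positivity
  have hhδ : h < δ := by
    rw [hhdef, div_lt_iff₀ hnpos]
    rw [div_lt_iff₀ hδ0] at hn
    nlinarith
  set t : ℕ → ℝ := fun i => -R + i * h with htdef
  have htval : ∀ i : ℕ, t i = -R + i * h := fun i => rfl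
  have ht0 : t 0 = -R := by simp [htval]
  have hnh : (n : ℝ) * h = 2 * R := by rw [hhdef]; field_simp
  have htn : t n = R := by rw [htval, hnh]; ring
  have htmem : ∀ i : ℕ, i ≤ n → t i ∈ Set.Icc (-R) R := by
    intro i hi
    rw [htval]
    constructor
    · nlinarith [mul_nonneg (Nat.cast_nonneg (α := ℝ) i) hh0.le]
    · have : (i : ℝ) * h ≤ n * h :=
        mul_le_mul_of_nonneg_right (by exact_mod_cast hi) hh0.le
      linarith
  set c : ℕ → ℝ := fun i => f (t (i + 1)) - f (t i) with hcdef
  have hc_small : ∀ i < n, |c i| ≤ ε₀ := by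
    intro i hi
    have h1 := htmem i (le_of_lt hi)
    have h2 := htmem (i + 1) hi
    have hd : dist (t (i + 1)) (t i) < δ := by
      rw [Real.dist_eq]
      have he : t (i + 1) - t i = h := by rw [htval, htval]; push_cast; ring
      rw [he, abs_of_pos hh0]
      exact hhδ
    have := hδ _ h2 _ h1 hd
    rw [Real.dist_eq] at this
    exact le_of_lt this
  set K : ℝ := ∑ i ∈ Finset.range n, |c i| with hKdef
  have hK0 : 0 ≤ K := Finset.sum_nonneg fun i _ => abs_nonneg _
  set ε' : ℝ := ε₀ / (K + 1) with hε'def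
  have hε'0 : 0 < ε' := by positivity
  -- choose slope
  have hψ0ev : ∀ᶠ y in atBot, |ψ y| < ε' := by
    simpa [Real.dist_eq] using Metric.tendsto_nhds.mp hψ0 ε' hε'0
  have hψ1ev : ∀ᶠ y in atTop, |ψ y - 1| < ε' := by
    simpa [Real.dist_eq] using Metric.tendsto_nhds.mp hψ1 ε' hε'0
  obtain ⟨T1, hT1⟩ := eventually_atBot.mp hψ0ev
  obtain ⟨T2, hT2⟩ := eventually_atTop.mp hψ1ev
  set T : ℝ := max (max (-T1) T2) 0 with hTdef
  have hTlow : ∀ y : ℝ, y ≤ -T → |ψ y| < ε' := by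
    intro y hy
    apply hT1
    have : -T1 ≤ T := le_max_of_le_left (le_max_left _ _)
    linarith
  have hThigh : ∀ y : ℝ, T ≤ y → |ψ y - 1| < ε' := by
    intro y hy
    apply hT2
    have : T2 ≤ T := le_max_of_le_left (le_max_right _ _)
    linarith
  set η : ℝ := h / 3 with hηdef
  have hη0 : 0 < η := by positivity
  set a : ℝ := (T + 1) / η with hadef
  have hT0 : (0:ℝ) ≤ T := le_max_right _ _
  have ha0 : 0 < a := by positivity
  have haη : a * η = T + 1 := by rw [hadef]; field_simp
  -- the approximant
  set g : ℝ → ℝ := fun x => f (t 0) + ∑ i ∈ Finset.range n, c i * ψ (a * (x - t (i + 1)))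
    with hgdef
  have hgmem : g ∈ N1R φ := by
    have hrw : g = (fun _ : ℝ => f (t 0)) +
        ∑ i ∈ Finset.range n, (fun x : ℝ => c i * ψ (a * (x - t (i + 1)))) := by
      funext x
      simp [hgdef, Finset.sum_apply]
    show g ∈ Sp φ
    rw [hrw]
    refine Submodule.add_mem _ (const_mem_Sp hL₁ hL₂ h12 _) (Submodule.sum_mem _ ?_)
    intro i _
    have hm := psiaff_mem_Sp hL₁ hL₂ h12 (c i) a (-(a * t (i + 1)))
    convert hm using 1
    funext x
    simp only [hψdef]
    congr 3
    ring
  refine ⟨g, hgmem, ?_⟩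
  intro x
  -- step function value at x
  set H : ℕ → ℝ := fun i => if t (i + 1) ≤ x then 1 else 0 with hHdef
  set s : ℝ := f (t 0) + ∑ i ∈ Finset.range n, c i * H i with hsdef
  -- Step E1 : |f x - s| ≤ ε₀
  have hE1 : |f x - s| ≤ ε₀ := by
    rcases lt_or_ge x (t 0) with hx0 | hx0
    · have hHz : ∀ i ∈ Finset.range n, c i * H i = 0 := by
        intro i _
        have hle : t 0 ≤ t (i + 1) := by
          rw [htval, htval]
          have : (0:ℝ) ≤ ((i:ℝ)+1) * h := by positivity
          push_cast
          linarith
        have hnle : ¬ t (i + 1) ≤ x := by push_neg; linarith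
        simp [hHdef, hnle]
      have hs : s = f (t 0) := by
        rw [hsdef, Finset.sum_congr rfl hHz]
        simp
      rw [hs, ht0]
      have h1 := htailA x (by rw [ht0] at hx0; linarith)
      have h2 := htailA (-R) le_rfl
      calc |f x - f (-R)| = |(f x - A) - (f (-R) - A)| := by congr 1; ring
        _ ≤ |f x - A| + |f (-R) - A| := abs_sub _ _
        _ ≤ ε₀ := by linarith
    rcases le_or_gt (t n) x with hxn | hxn
    · have hHone : ∀ i ∈ Finset.range n, c i * H i = c i := by
        intro i hi
        rw [Finset.mem_range] at hi
        have hle : t (i + 1) ≤ x := by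
          have h1 : t (i + 1) ≤ t n := by
            rw [htval, htval]
            have : ((i : ℝ) + 1) * h ≤ n * h :=
              mul_le_mul_of_nonneg_right (by exact_mod_cast hi) hh0.le
            push_cast
            linarith
          linarith
        simp [hHdef, hle]
      have hs : s = f (t n) := by
        rw [hsdef, Finset.sum_congr rfl hHone, Finset.sum_range_sub (fun i => f (t i))]
        ring
      rw [hs, htn]
      have h1 := htailB x (by rw [htn] at hxn; linarith)
      have h2 := htailB R le_rfl
      calc |f x - f R| = |(f x - B) - (f R - B)| := by congr 1; ring
        _ ≤ |f x - B| + |f R - B| := abs_sub _ _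
        _ ≤ ε₀ := by linarith
    · -- middle case
      set u : ℝ := (x + R) / h with hudef
      have hu0 : 0 ≤ u := div_nonneg (by rw [ht0] at hx0; linarith) hh0.le
      set j : ℕ := (⌊u⌋).toNat with hjdef
      have hjcast : (j : ℝ) = ⌊u⌋ := by
        rw [hjdef]
        exact_mod_cast Int.toNat_of_nonneg (Int.floor_nonneg.mpr hu0)
      have hj1 : (j : ℝ) ≤ u := by rw [hjcast]; exact Int.floor_le _
      have hj2 : u < j + 1 := by rw [hjcast]; exact Int.lt_floor_add_one _
      have huh : u * h = x + R := by rw [hudef]; field_simp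
      have htj : t j ≤ x := by
        have h1 : (j : ℝ) * h ≤ u * h := mul_le_mul_of_nonneg_right hj1 hh0.le
        rw [huh] at h1
        rw [htval]
        linarith
      have htj1 : x < t (j + 1) := by
        have h1 : u * h < ((j : ℝ) + 1) * h := mul_lt_mul_of_pos_right hj2 hh0
        rw [huh] at h1
        rw [htval]
        push_cast
        linarith
      have hun : u < n := by
        rw [hudef, div_lt_iff₀ hh0]
        have hxR : x < R := by rw [htn] at hxn; exact hxn
        linarith [hnh]
      have hjn : j < n := by
        have : (j : ℝ) < n := lt_of_le_of_lt hj1 hun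
        exact_mod_cast this
      have hHval : ∀ i ∈ Finset.range n, c i * H i = if i < j then c i else 0 := by
        intro i _
        rcases lt_or_ge i j with hij | hij
        · have hle : t (i + 1) ≤ x := by
            have h1 : t (i + 1) ≤ t j := by
              rw [htval, htval]
              have : ((i : ℝ) + 1) * h ≤ j * h :=
                mul_le_mul_of_nonneg_right (by exact_mod_cast hij) hh0.le
              push_cast
              linarith
            linarith
          simp [hHdef, hle, hij]
        · have hnle : ¬ t (i + 1) ≤ x := by
            push_neg
            have h1 : t (j + 1) ≤ t (i + 1) := by
              rw [htval, htval]
              have : ((j : ℝ) + 1) * h ≤ ((i : ℝ) + 1) * h := by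
                apply mul_le_mul_of_nonneg_right _ hh0.le
                have : (j : ℝ) ≤ i := by exact_mod_cast hij
                linarith
              push_cast
              linarith
            linarith
          simp [hHdef, hnle, not_lt.mpr hij]
      have hs : s = f (t j) := by
        rw [hsdef, Finset.sum_congr rfl hHval, sum_indicator_eq,
          Nat.min_eq_left (le_of_lt hjn), Finset.sum_range_sub (fun i => f (t i))]
        ring
      rw [hs]
      have hxmem : x ∈ Set.Icc (-R) R := by
        constructor
        · rw [ht0] at hx0; linarith
        · rw [htn] at hxn; linarith
      have hjmem := htmem j (le_of_lt hjn)
      have hdist : dist x (t j) < δ := by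
        rw [Real.dist_eq, abs_of_nonneg (by linarith)]
        have hstep : t (j + 1) - t j = h := by rw [htval, htval]; push_cast; ring
        linarith
      have := hδ x hxmem (t j) hjmem hdist
      rw [Real.dist_eq] at this
      exact le_of_lt this
  -- Step E2 : |s - g x| ≤ ε₀ + ε₀ * (1 + M)
  have hE2 : |s - g x| ≤ ε₀ + ε₀ * (1 + M) := by
    have hsg : s - g x = ∑ i ∈ Finset.range n, c i * (H i - ψ (a * (x - t (i + 1)))) := by
      simp only [hsdef, hgdef, mul_sub]
      rw [Finset.sum_sub_distrib]
      ring
    rw [hsg]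
    have hb : |∑ i ∈ Finset.range n, c i * (H i - ψ (a * (x - t (i + 1))))| ≤
        ∑ i ∈ Finset.range n, |c i| * |H i - ψ (a * (x - t (i + 1)))| := by
      refine (Finset.abs_sum_le_sum_abs _ _).trans ?_
      apply Finset.sum_le_sum
      intro i _
      rw [abs_mul]
    refine hb.trans ?_
    -- far bound
    have hfar : ∀ i : ℕ, η ≤ |x - t (i + 1)| →
        |H i - ψ (a * (x - t (i + 1)))| ≤ ε' := by
      intro i hfar
      rcases le_or_gt x (t (i + 1)) with hxi | hxi
      · have habs : |x - t (i + 1)| = t (i + 1) - x := by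
          rw [abs_of_nonpos (by linarith)]; ring
        rw [habs] at hfar
        have hH : H i = 0 := by
          have hnle : ¬ t (i + 1) ≤ x := by push_neg; linarith
          simp [hHdef, hnle]
        have harg : a * (x - t (i + 1)) ≤ -T := by
          have h1 : a * (x - t (i + 1)) ≤ a * (-η) :=
            mul_le_mul_of_nonneg_left (by linarith) ha0.le
          have h2 : a * (-η) = -(T + 1) := by rw [mul_neg, haη]
          linarith
        have hψb := hTlow _ harg
        rw [hH, zero_sub, abs_neg]
        exact hψb.le
      · have habs : |x - t (i + 1)| = x - t (i + 1) := abs_of_pos (by linarith)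
        rw [habs] at hfar
        have hH : H i = 1 := by
          have hle : t (i + 1) ≤ x := by linarith
          simp [hHdef, hle]
        have harg : T ≤ a * (x - t (i + 1)) := by
          have h1 : a * η ≤ a * (x - t (i + 1)) :=
            mul_le_mul_of_nonneg_left (by linarith) ha0.le
          linarith [haη]
        have hψb := hThigh _ harg
        rw [hH, abs_sub_comm]
        exact hψb.le
    -- near bound
    have hnear : ∀ i : ℕ, |H i - ψ (a * (x - t (i + 1)))| ≤ 1 + M := by
      intro i
      have h1 : |H i| ≤ 1 := by
        rw [hHdef]
        rcases le_or_gt (t (i + 1)) x with hc2 | hc2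
        · simp [hc2]
        · simp [not_le.mpr hc2]
      calc |H i - ψ (a * (x - t (i + 1)))| ≤ |H i| + |ψ (a * (x - t (i + 1)))| := abs_sub _ _
        _ ≤ 1 + M := add_le_add h1 (hM _)
    set Tr : Finset ℕ := (Finset.range n).filter (fun i => |x - t (i + 1)| < η) with hTrdef
    have hcard : Tr.card ≤ 1 := by
      rw [Finset.card_le_one]
      intro i hi k hk
      rw [hTrdef, Finset.mem_filter] at hi hk
      by_contra hik
      clear_value t η
      obtain ⟨hi2a, hi2b⟩ := abs_lt.mp hi.2
      obtain ⟨hk2a, hk2b⟩ := abs_lt.mp hk.2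
      rcases Nat.lt_or_ge i k with hlt | hge
      · have hcast : (i : ℝ) + 1 ≤ k := by exact_mod_cast hlt
        have h1 : t (k + 1) - t (i + 1) = ((k : ℝ) - i) * h := by
          rw [htval, htval]; push_cast; ring
        have h2 : (1 : ℝ) * h ≤ ((k : ℝ) - i) * h :=
          mul_le_mul_of_nonneg_right (by linarith) hh0.le
        rw [hηdef] at hi2a hi2b hk2a hk2b
        linarith
      · have hlt : k < i := by omega
        have hcast : (k : ℝ) + 1 ≤ i := by exact_mod_cast hlt
        have h1 : t (i + 1) - t (k + 1) = ((i : ℝ) - k) * h := by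
          rw [htval, htval]; push_cast; ring
        have h2 : (1 : ℝ) * h ≤ ((i : ℝ) - k) * h :=
          mul_le_mul_of_nonneg_right (by linarith) hh0.le
        rw [hηdef] at hi2a hi2b hk2a hk2b
        linarith
    have hsplit := Finset.sum_filter_add_sum_filter_not (Finset.range n)
      (fun i => |x - t (i + 1)| < η)
      (fun i => |c i| * |H i - ψ (a * (x - t (i + 1)))|)
    rw [← hsplit]
    have hbound2 : ∑ i ∈ (Finset.range n).filter (fun i => ¬ |x - t (i + 1)| < η),
        |c i| * |H i - ψ (a * (x - t (i + 1)))| ≤ ε₀ := by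
      have step1 : ∑ i ∈ (Finset.range n).filter (fun i => ¬ |x - t (i + 1)| < η),
          |c i| * |H i - ψ (a * (x - t (i + 1)))| ≤
          ∑ i ∈ (Finset.range n).filter (fun i => ¬ |x - t (i + 1)| < η), |c i| * ε' := by
        apply Finset.sum_le_sum
        intro i hi
        rw [Finset.mem_filter] at hi
        exact mul_le_mul_of_nonneg_left (hfar i (not_lt.mp hi.2)) (abs_nonneg _)
      have step2 : ∑ i ∈ (Finset.range n).filter (fun i => ¬ |x - t (i + 1)| < η),
          |c i| * ε' ≤ ∑ i ∈ Finset.range n, |c i| * ε' := by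
        apply Finset.sum_le_sum_of_subset_of_nonneg (Finset.filter_subset _ _)
        intro i _ _
        positivity
      have step3 : ∑ i ∈ Finset.range n, |c i| * ε' = K * ε' := by
        rw [hKdef, Finset.sum_mul]
      have step4 : K * ε' ≤ ε₀ := by
        rw [hε'def, mul_div_assoc']
        rw [div_le_iff₀ (by positivity)]
        nlinarith
      linarith
    have hbound1 : ∑ i ∈ Tr, |c i| * |H i - ψ (a * (x - t (i + 1)))| ≤ ε₀ * (1 + M) := by
      rcases Tr.eq_empty_or_nonempty with he | hne2
      · rw [he, Finset.sum_empty]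
        positivity
      · have hc1 : Tr.card = 1 := le_antisymm hcard (Finset.card_pos.mpr hne2)
        obtain ⟨i0, hi0⟩ := Finset.card_eq_one.mp hc1
        rw [hi0, Finset.sum_singleton]
        have hi0mem : i0 ∈ Tr := by rw [hi0]; exact Finset.mem_singleton_self _
        rw [hTrdef, Finset.mem_filter, Finset.mem_range] at hi0mem
        have hc2 := hc_small i0 hi0mem.1
        have hd2 := hnear i0
        have := mul_le_mul hc2 hd2 (abs_nonneg _) hε₀.le
        linarith
      -- note Tr is the filter set
    have hTreq : ∑ i ∈ (Finset.range n).filter (fun i => |x - t (i + 1)| < η),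
        |c i| * |H i - ψ (a * (x - t (i + 1)))| =
        ∑ i ∈ Tr, |c i| * |H i - ψ (a * (x - t (i + 1)))| := by rw [hTrdef]
    rw [hTreq]
    linarith
  have htotal : |f x - g x| ≤ ε₀ * (M + 3) := by
    calc |f x - g x| = |(f x - s) + (s - g x)| := by rw [sub_add_sub_cancel]
      _ ≤ |f x - s| + |s - g x| := abs_add_le _ _
      _ ≤ ε₀ + (ε₀ + ε₀ * (1 + M)) := by linarith
      _ = ε₀ * (M + 3) := by ring
  have hfin : ε₀ * (M + 3) = ε := by
    rw [hε₀def]; field_simp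
  linarith

/-- For `φ ∈ S(ℝ)`, the uniform closure of `N¹_φ(ℝ)` is contained in `S(ℝ)`;
if moreover the limits of `φ` at `−∞` and `∞` differ, then it equals `S(ℝ)`. -/
theorem stmt16 (φ : ℝ → ℝ) (hφ : φ ∈ SR) :
    UnifClosure (N1R φ) ⊆ SR ∧
    ((∃ L₁ L₂ : ℝ, Tendsto φ atBot (𝓝 L₁) ∧ Tendsto φ atTop (𝓝 L₂) ∧ L₁ ≠ L₂) →
      UnifClosure (N1R φ) = SR) := by
  refine ⟨closure_subset_SR hφ, ?_⟩
  rintro ⟨L₁, L₂, hL₁, hL₂, h12⟩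
  apply Set.Subset.antisymm (closure_subset_SR hφ)
  intro f hf
  intro ε hε
  exact dense_step hL₁ hL₂ h12 hφ hf ε hε
end
end

section
/- Let n ∈ ℕ and φ ∈ S(ℝ). Then the sup-norm closure of N^∞_φ(ℝⁿ) is contained in S(ℝⁿ). -/
open Filter Topology MeasureTheory

noncomputable section

/-- `ℝⁿ` with the Euclidean norm. -/
abbrev E (n : ℕ) := EuclideanSpace ℝ (Fin n)

/-- The space `N^l_φ(ℝⁿ)` of `l`-hidden-layer neural networks (the value at
`l = 0` is a dummy). -/
def NN (φ : ℝ → ℝ) (n : ℕ) : ℕ → Set (E n → ℝ)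
  | 0 => {0}
  | 1 => ↑(Submodule.span ℝ
      {f : E n → ℝ | ∃ (a : E n) (b : ℝ), f = fun x => φ ((inner ℝ a x : ℝ) + b)})
  | (l+2) => ↑(Submodule.span ℝ
      {f : E n → ℝ | ∃ g ∈ NN φ n (l+1), ∃ b : ℝ, f = fun x => φ (g x + b)})

/-- `N^∞_φ(ℝⁿ) = ⋃_{l ≥ 1} N^l_φ(ℝⁿ)`. -/
def NNinf (φ : ℝ → ℝ) (n : ℕ) : Set (E n → ℝ) :=
  {f | ∃ l : ℕ, 1 ≤ l ∧ f ∈ NN φ n l}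

/-- `C₀(ℝⁿ)`: continuous real-valued functions on `ℝⁿ` vanishing at infinity. -/
def C0 (n : ℕ) : Set (E n → ℝ) :=
  {f | Continuous f ∧ Tendsto f (cocompact (E n)) (𝓝 0)}

/-- `S(ℝⁿ)`: the uniformly closed span of finite products
`x ↦ ∏_{j=1}^m g_j(a_j·x)` with `g_j ∈ S(ℝ)` and `a_j ∈ ℝⁿ`. -/
def SRn (n : ℕ) : Set (E n → ℝ) :=
  UnifClosure ↑(Submodule.span ℝ
    {f : E n → ℝ | ∃ (m : ℕ), 1 ≤ m ∧ ∃ (g : Fin m → ℝ → ℝ) (a : Fin m → E n),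
      (∀ j, g j ∈ SR) ∧ f = fun x => ∏ j, g j (inner ℝ (a j) x : ℝ)})

-- generic closure lemmas
lemma mem_uc_self {α : Type*} {S : Set (α → ℝ)} {f} (hf : f ∈ S) : f ∈ UnifClosure S :=
  fun ε hε => ⟨f, hf, fun x => by simp [le_of_lt hε]⟩

lemma uc_mono {α : Type*} {S T : Set (α → ℝ)} (h : S ⊆ T) :
    UnifClosure S ⊆ UnifClosure T := fun f hf ε hε =>
  let ⟨g, hg, hfg⟩ := hf ε hε; ⟨g, h hg, hfg⟩

lemma uc_idem {α : Type*} {S : Set (α → ℝ)} :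
    UnifClosure (UnifClosure S) ⊆ UnifClosure S := by
  intro f hf ε hε
  obtain ⟨g, hg, hfg⟩ := hf (ε/2) (by linarith)
  obtain ⟨h, hh, hgh⟩ := hg (ε/2) (by linarith)
  refine ⟨h, hh, fun x => ?_⟩
  calc |f x - h x| ≤ |f x - g x| + |g x - h x| := abs_sub_le _ _ _
    _ ≤ ε/2 + ε/2 := add_le_add (hfg x) (hgh x)
    _ = ε := by ring

lemma SR.bounded {f : ℝ → ℝ} (hf : f ∈ SR) : ∃ C, ∀ x, |f x| ≤ C := by
  obtain ⟨hc, ⟨L1, h1⟩, ⟨L2, h2⟩⟩ := hf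
  obtain ⟨a, ha⟩ := (eventually_atBot).mp (Metric.tendsto_nhds.mp h1 1 one_pos)
  obtain ⟨b, hb⟩ := (eventually_atTop).mp (Metric.tendsto_nhds.mp h2 1 one_pos)
  obtain ⟨C, hC⟩ := (isCompact_Icc (a := a) (b := b)).exists_bound_of_continuousOn
    hc.continuousOn
  refine ⟨max (max (|L1| + 1) (|L2| + 1)) C, fun x => ?_⟩
  rcases le_or_gt x a with hx | hx
  · have := ha x hx
    rw [Real.dist_eq] at this
    have : |f x| ≤ |L1| + 1 := by
      calc |f x| ≤ |f x - L1| + |L1| := by simpa using abs_add_le (f x - L1) L1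
        _ ≤ |L1| + 1 := by linarith
    exact this.trans (le_max_of_le_left (le_max_left _ _))
  rcases le_or_gt x b with hx' | hx'
  · have := hC x ⟨hx.le, hx'⟩
    rw [Real.norm_eq_abs] at this
    exact this.trans (le_max_right _ _)
  · have := hb x hx'.le
    rw [Real.dist_eq] at this
    have : |f x| ≤ |L2| + 1 := by
      calc |f x| ≤ |f x - L2| + |L2| := by simpa using abs_add_le (f x - L2) L2
        _ ≤ |L2| + 1 := by linarith
    exact this.trans (le_max_of_le_left (le_max_right _ _))

def Gen (n : ℕ) : Set (E n → ℝ) :=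
  {f : E n → ℝ | ∃ (m : ℕ), 1 ≤ m ∧ ∃ (g : Fin m → ℝ → ℝ) (a : Fin m → E n),
      (∀ j, g j ∈ SR) ∧ f = fun x => ∏ j, g j (inner ℝ (a j) x : ℝ)}

def Asub (n : ℕ) : Submodule ℝ (E n → ℝ) := Submodule.span ℝ (Gen n)

lemma one_mem_gen (n : ℕ) : (fun _ : E n => (1:ℝ)) ∈ Gen n :=
  ⟨1, le_refl 1, fun _ => fun _ => 1, fun _ => 0,
    fun _ => ⟨continuous_const, ⟨1, tendsto_const_nhds⟩, ⟨1, tendsto_const_nhds⟩⟩,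
    by funext x; simp⟩

lemma const_mem_A (n : ℕ) (c : ℝ) : (fun _ : E n => c) ∈ Asub n := by
  have := (Asub n).smul_mem c (Submodule.subset_span (one_mem_gen n))
  convert this using 1
  funext x; simp

lemma gen_mul (n : ℕ) {f g : E n → ℝ} (hf : f ∈ Gen n) (hg : g ∈ Gen n) :
    f * g ∈ Gen n := by
  obtain ⟨m1, hm1, g1, a1, hg1, rfl⟩ := hf
  obtain ⟨m2, hm2, g2, a2, hg2, rfl⟩ := hg
  refine ⟨m1 + m2, hm1.trans (Nat.le_add_right _ _), Fin.append g1 g2, Fin.append a1 a2,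
    fun j => ?_, ?_⟩
  · refine Fin.addCases (fun i => ?_) (fun i => ?_) j
    · rw [Fin.append_left]; exact hg1 i
    · rw [Fin.append_right]; exact hg2 i
  · funext x
    show (∏ j, g1 j (inner ℝ (a1 j) x)) * (∏ j, g2 j (inner ℝ (a2 j) x)) = _
    rw [Fin.prod_univ_add]
    simp [Fin.append_left, Fin.append_right]

lemma mul_mem_A {n : ℕ} {f g : E n → ℝ} (hf : f ∈ Asub n) (hg : g ∈ Asub n) :
    f * g ∈ Asub n := by
  induction hf using Submodule.span_induction with
  | mem f' hf' =>
    induction hg using Submodule.span_induction with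
    | mem g' hg' => exact Submodule.subset_span (gen_mul n hf' hg')
    | zero => simp only [mul_zero]; exact (Asub n).zero_mem
    | add x y hx hy ihx ihy => rw [mul_add]; exact (Asub n).add_mem ihx ihy
    | smul c x hx ih => rw [mul_smul_comm]; exact (Asub n).smul_mem c ih
  | zero => simp only [zero_mul]; exact (Asub n).zero_mem
  | add x y hx hy ihx ihy => rw [add_mul]; exact (Asub n).add_mem ihx ihy
  | smul c x hx ih => rw [smul_mul_assoc]; exact (Asub n).smul_mem c ih

def Bdd {α : Type*} (f : α → ℝ) : Prop := ∃ C, ∀ x, |f x| ≤ C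

lemma bdd_gen {n : ℕ} {f : E n → ℝ} (hf : f ∈ Gen n) : Bdd f := by
  obtain ⟨m, hm, g, a, hg, rfl⟩ := hf
  choose C hC using fun j => SR.bounded (hg j)
  refine ⟨∏ j, max (C j) 0, fun x => ?_⟩
  rw [Finset.abs_prod]
  exact Finset.prod_le_prod (fun j _ => abs_nonneg _)
    (fun j _ => (hC j _).trans (le_max_left _ _))

lemma bdd_A {n : ℕ} {f : E n → ℝ} (hf : f ∈ Asub n) : Bdd f := by
  induction hf using Submodule.span_induction with
  | mem f' hf' => exact bdd_gen hf'
  | zero => exact ⟨0, by simp⟩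
  | add x y hx hy ihx ihy =>
    obtain ⟨C1, h1⟩ := ihx; obtain ⟨C2, h2⟩ := ihy
    exact ⟨C1 + C2, fun t => (abs_add_le _ _).trans (add_le_add (h1 t) (h2 t))⟩
  | smul c x hx ih =>
    obtain ⟨C, h⟩ := ih
    refine ⟨|c| * max C 0, fun t => ?_⟩
    show |c * x t| ≤ _
    rw [abs_mul]
    exact mul_le_mul_of_nonneg_left ((h t).trans (le_max_left _ _)) (abs_nonneg c)

lemma bdd_cl {n : ℕ} {f : E n → ℝ} (hf : f ∈ UnifClosure ↑(Asub n)) : Bdd f := by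
  obtain ⟨g, hg, hfg⟩ := hf 1 one_pos
  obtain ⟨C, hC⟩ := bdd_A hg
  refine ⟨C + 1, fun x => ?_⟩
  calc |f x| ≤ |f x - g x| + |g x| := by simpa using abs_add_le (f x - g x) (g x)
    _ ≤ 1 + C := add_le_add (hfg x) (hC x)
    _ = C + 1 := by ring

def clSub (n : ℕ) : Submodule ℝ (E n → ℝ) where
  carrier := UnifClosure ↑(Asub n)
  zero_mem' := mem_uc_self (Asub n).zero_mem
  add_mem' := by
    intro f g hf hg ε hε
    obtain ⟨f', hf', h1⟩ := hf (ε/2) (by linarith)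
    obtain ⟨g', hg', h2⟩ := hg (ε/2) (by linarith)
    refine ⟨f' + g', (Asub n).add_mem hf' hg', fun x => ?_⟩
    show |(f x + g x) - (f' x + g' x)| ≤ ε
    calc |(f x + g x) - (f' x + g' x)| = |(f x - f' x) + (g x - g' x)| := by congr 1; ring
      _ ≤ |f x - f' x| + |g x - g' x| := abs_add_le _ _
      _ ≤ ε/2 + ε/2 := add_le_add (h1 x) (h2 x)
      _ = ε := by ring
  smul_mem' := by
    intro c f hf ε hε
    have hpos : 0 < ε / (|c| + 1) := div_pos hε (by positivity)
    obtain ⟨g, hg, h⟩ := hf _ hpos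
    refine ⟨c • g, (Asub n).smul_mem c hg, fun x => ?_⟩
    show |c * f x - c * g x| ≤ ε
    rw [← mul_sub, abs_mul]
    calc |c| * |f x - g x| ≤ (|c|+1) * (ε / (|c|+1)) :=
          mul_le_mul (by linarith [abs_nonneg c]) (h x) (abs_nonneg _) (by positivity)
      _ = ε := by field_simp

lemma poly_mem_A {n : ℕ} {g : E n → ℝ} (hg : g ∈ Asub n) (b : ℝ) (p : Polynomial ℝ) :
    (fun x => p.eval (g x + b)) ∈ Asub n := by
  have hgb : (fun x : E n => g x + b) ∈ Asub n := by
    have := (Asub n).add_mem hg (const_mem_A n b)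
    convert this using 1
    rfl
  have hpow : ∀ k : ℕ, (fun x : E n => (g x + b) ^ k) ∈ Asub n := by
    intro k; induction k with
    | zero => simpa using const_mem_A n 1
    | succ k ih =>
      have := mul_mem_A hgb ih
      convert this using 1
      funext x
      show (g x + b)^(k+1) = (g x + b) * (g x + b)^k
      ring
  induction p using Polynomial.induction_on with
  | C a => simpa using const_mem_A n a
  | add p q hp hq =>
    have := (Asub n).add_mem hp hq
    convert this using 1
    funext x; simp
  | monomial k a _ =>
    have := (Asub n).smul_mem a (hpow (k+1))
    convert this using 1
    funext x
    simp [Polynomial.eval_mul, Polynomial.eval_pow]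

lemma comp_mem_cl {n : ℕ} {φ : ℝ → ℝ} (hφc : Continuous φ) {g : E n → ℝ}
    (hg : g ∈ UnifClosure ↑(Asub n)) (b : ℝ) :
    (fun x => φ (g x + b)) ∈ UnifClosure ↑(Asub n) := by
  obtain ⟨M, hM⟩ := bdd_cl hg
  intro ε hε
  set R : ℝ := M + |b| + 1 with hR
  have hmem : ∀ x, g x + b ∈ Set.Icc (-R) R := by
    intro x
    have h1 : |g x + b| ≤ R := by
      calc |g x + b| ≤ |g x| + |b| := abs_add_le _ _
        _ ≤ R := by rw [hR]; linarith [hM x]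
    exact abs_le.mp h1
  obtain ⟨p, hp⟩ := exists_polynomial_near_of_continuousOn (-R) R φ hφc.continuousOn
    (ε/2) (by linarith)
  have hucont : UniformContinuousOn (fun t => p.eval t) (Set.Icc (-R) R) :=
    isCompact_Icc.uniformContinuousOn_of_continuous (Polynomial.continuous p).continuousOn
  obtain ⟨δ, hδ, hδ'⟩ := Metric.uniformContinuousOn_iff.mp hucont (ε/2) (by linarith)
  have hηpos : 0 < min (δ/2) 1 := lt_min (by linarith) one_pos
  obtain ⟨g', hg', hgg'⟩ := hg _ hηpos
  have hmem' : ∀ x, g' x + b ∈ Set.Icc (-R) R := by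
    intro x
    have h2 : |g' x| ≤ M + 1 := by
      calc |g' x| ≤ |g' x - g x| + |g x| := by simpa using abs_add_le (g' x - g x) (g x)
        _ ≤ 1 + M := add_le_add
            (by rw [abs_sub_comm]; exact (hgg' x).trans (min_le_right _ _)) (hM x)
        _ = M + 1 := by ring
    have h1 : |g' x + b| ≤ R := by
      calc |g' x + b| ≤ |g' x| + |b| := abs_add_le _ _
        _ ≤ R := by rw [hR]; linarith
    exact abs_le.mp h1
  refine ⟨fun x => p.eval (g' x + b), poly_mem_A hg' b p, fun x => ?_⟩
  have h1 : |φ (g x + b) - p.eval (g x + b)| ≤ ε/2 := by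
    have := hp (g x + b) (hmem x)
    rw [abs_sub_comm] at this; linarith
  have h2 : |p.eval (g x + b) - p.eval (g' x + b)| ≤ ε/2 := by
    have hd : dist (g x + b) (g' x + b) < δ := by
      rw [Real.dist_eq]
      have he : |g x + b - (g' x + b)| = |g x - g' x| := by congr 1; ring
      rw [he]
      exact lt_of_le_of_lt ((hgg' x).trans (min_le_left _ _)) (by linarith)
    have := hδ' _ (hmem x) _ (hmem' x) hd
    rw [Real.dist_eq] at this; linarith
  calc |φ (g x + b) - p.eval (g' x + b)|
      ≤ |φ (g x + b) - p.eval (g x + b)| + |p.eval (g x + b) - p.eval (g' x + b)| :=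
        abs_sub_le _ _ _
    _ ≤ ε/2 + ε/2 := add_le_add h1 h2
    _ = ε := by ring

lemma NN_subset_cl (φ : ℝ → ℝ) (hφ : φ ∈ SR) (n : ℕ) :
    ∀ l, NN φ n (l+1) ⊆ UnifClosure ↑(Asub n) := by
  intro l
  induction l with
  | zero =>
    intro f hf
    rw [NN] at hf
    refine (Submodule.span_le (p := clSub n)).mpr ?_ hf
    rintro f' ⟨a, b, rfl⟩
    refine mem_uc_self (S := (↑(Asub n) : Set (E n → ℝ))) (Submodule.subset_span ?_)
    refine ⟨1, le_refl 1, fun _ => fun t => φ (t + b), fun _ => a, fun _ => ?_, ?_⟩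
    · obtain ⟨hc, ⟨L1, h1⟩, ⟨L2, h2⟩⟩ := hφ
      exact ⟨hc.comp (continuous_id.add continuous_const),
        ⟨L1, h1.comp (tendsto_atBot_add_const_right _ b tendsto_id)⟩,
        ⟨L2, h2.comp (tendsto_atTop_add_const_right _ b tendsto_id)⟩⟩
    · funext x; simp
  | succ l ih =>
    intro f hf
    rw [NN] at hf
    refine (Submodule.span_le (p := clSub n)).mpr ?_ hf
    rintro f' ⟨g, hgNN, b, rfl⟩
    exact comp_mem_cl hφ.1 (ih hgNN) b

/-- For `φ ∈ S(ℝ)`, the uniform closure of `N^∞_φ(ℝⁿ)` is contained in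
`S(ℝⁿ)`. -/
theorem stmt17 (n : ℕ) (hn : 1 ≤ n) (φ : ℝ → ℝ) (hφ : φ ∈ SR) :
    UnifClosure (NNinf φ n) ⊆ SRn n := by
  have hsub : NNinf φ n ⊆ UnifClosure ↑(Asub n) := by
    rintro f ⟨l, hl, hf⟩
    match l, hl, hf with
    | (l+1), _, hf => exact NN_subset_cl φ hφ n l hf
  have hSRn : SRn n = UnifClosure ↑(Asub n) := rfl
  rw [hSRn]
  exact fun f hf => uc_idem (uc_mono hsub hf)
end
end

section
/- Let φ ∈ S(ℝ) with lim_{x→−∞} φ(x) ≠ lim_{x→∞} φ(x). Let h : ℝ → ℝ be a continuous function with finite limits at ±∞ satisfying h(x) = 0 for all x ≤ 0 and h(x) = 1 for all x ≥ 1, and define f : ℝ² → ℝ by f(x,y) := h(x)h(y). Then for every one-layer network g ∈ N¹_φ(ℝ²) one has sup_{(x,y)∈ℝ²} |f(x,y) − g(x,y)| ≥ 1/4. -/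
open Filter Topology MeasureTheory

noncomputable section

noncomputable def lval (L₁ L₂ : ℝ) (φ : ℝ → ℝ) (c2 c1 b : ℝ) : ℝ :=
  if 0 < c2 then L₂ else if c2 < 0 then L₁
  else if 0 < c1 then L₂ else if c1 < 0 then L₁ else φ b

lemma quad_atTop {c2 c1 b : ℝ} (hc : 0 < c2) :
    Tendsto (fun t : ℝ => c1 * t + c2 * t ^ 2 + b) atTop atTop := by
  apply tendsto_atTop_add_const_right
  have : Tendsto (fun t : ℝ => t * (c1 + c2 * t)) atTop atTop := by
    apply Tendsto.atTop_mul_atTop₀ tendsto_id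
    exact tendsto_atTop_add_const_left _ _ (Tendsto.const_mul_atTop hc tendsto_id)
  refine this.congr (fun t => by ring)

lemma lin_atTop {c1 b : ℝ} (hc : 0 < c1) :
    Tendsto (fun t : ℝ => c1 * t + b) atTop atTop :=
  tendsto_atTop_add_const_right _ _ (Tendsto.const_mul_atTop hc tendsto_id)

lemma lval_tendsto (L₁ L₂ : ℝ) (φ : ℝ → ℝ)
    (hφ₁ : Tendsto φ atBot (𝓝 L₁)) (hφ₂ : Tendsto φ atTop (𝓝 L₂))
    (c2 c1 b : ℝ) :
    Tendsto (fun t : ℝ => φ (c1 * t + c2 * t ^ 2 + b)) atTop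
      (𝓝 (lval L₁ L₂ φ c2 c1 b)) := by
  rcases lt_trichotomy c2 0 with h2 | h2 | h2
  · have : Tendsto (fun t : ℝ => c1 * t + c2 * t ^ 2 + b) atTop atBot := by
      have := quad_atTop (c2 := -c2) (c1 := -c1) (b := -b) (by linarith)
      rw [tendsto_atBot]
      intro x
      filter_upwards [this.eventually_ge_atTop (-x)] with t ht
      nlinarith [ht]
    simpa [lval, h2, not_lt.2 h2.le, Function.comp_def] using hφ₁.comp this
  · subst h2
    rcases lt_trichotomy c1 0 with h1 | h1 | h1
    · have : Tendsto (fun t : ℝ => c1 * t + (0:ℝ) * t ^ 2 + b) atTop atBot := by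
        have := lin_atTop (c1 := -c1) (b := -b) (by linarith)
        rw [tendsto_atBot]
        intro x
        filter_upwards [this.eventually_ge_atTop (-x)] with t ht
        nlinarith [ht]
      simpa [lval, h1, not_lt.2 h1.le, Function.comp_def] using hφ₁.comp this
    · subst h1
      have : (fun t : ℝ => φ ((0:ℝ) * t + (0:ℝ) * t ^ 2 + b)) = fun _ => φ b := by
        funext t; ring_nf
      rw [this]
      simpa [lval] using tendsto_const_nhds
    · have := hφ₂.comp (lin_atTop (b := b) h1)
      have h2 : Tendsto (fun t : ℝ => φ (c1 * t + (0:ℝ) * t ^ 2 + b)) atTop (𝓝 L₂) := by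
        refine this.congr (fun t => by norm_num)
      simpa [lval, h1, not_lt.2 h1.le, lt_irrefl] using h2
  · simpa [lval, h2, Function.comp_def] using hφ₂.comp (quad_atTop (c1 := c1) (b := b) h2)

lemma lval_rect (L₁ L₂ : ℝ) (φ : ℝ → ℝ) (c2 c1 b : ℝ) :
    lval L₁ L₂ φ c2 c1 b - lval L₁ L₂ φ (-c2) c1 b - lval L₁ L₂ φ c2 (-c1) b
      + lval L₁ L₂ φ (-c2) (-c1) b = 0 := by
  unfold lval
  rcases lt_trichotomy c2 0 with h2 | h2 | h2 <;>
    rcases lt_trichotomy c1 0 with h1 | h1 | h1 <;>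
    simp_all <;> ring

noncomputable def vec2 (u v : ℝ) : EuclideanSpace ℝ (Fin 2) :=
  (WithLp.equiv 2 (Fin 2 → ℝ)).symm ![u, v]

lemma vec2_zero (u v : ℝ) : vec2 u v 0 = u := by simp [vec2]
lemma vec2_one (u v : ℝ) : vec2 u v 1 = v := by simp [vec2]
lemma inner_vec2 (a : EuclideanSpace ℝ (Fin 2)) (u v : ℝ) :
    (inner ℝ a (vec2 u v) : ℝ) = a 0 * u + a 1 * v := by
  simp [vec2, PiLp.inner_apply, Fin.sum_univ_two]
  ring

/-- the four paths -/
noncomputable def pth (i : Fin 4) (t : ℝ) : EuclideanSpace ℝ (Fin 2) :=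
  match i with
  | 0 => vec2 t (t ^ 2)
  | 1 => vec2 t (-t ^ 2)
  | 2 => vec2 (-t) (t ^ 2)
  | 3 => vec2 (-t) (-t ^ 2)

def RectP (g : EuclideanSpace ℝ (Fin 2) → ℝ) : Prop :=
  ∃ A B C D : ℝ,
    Tendsto (fun t => g (pth 0 t)) atTop (𝓝 A) ∧
    Tendsto (fun t => g (pth 1 t)) atTop (𝓝 B) ∧
    Tendsto (fun t => g (pth 2 t)) atTop (𝓝 C) ∧
    Tendsto (fun t => g (pth 3 t)) atTop (𝓝 D) ∧
    A - B - C + D = 0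

lemma rectP_span (φ : ℝ → ℝ) (L₁ L₂ : ℝ)
    (hφ₁ : Tendsto φ atBot (𝓝 L₁)) (hφ₂ : Tendsto φ atTop (𝓝 L₂))
    (g : EuclideanSpace ℝ (Fin 2) → ℝ)
    (hg : g ∈ Submodule.span ℝ
      {f : EuclideanSpace ℝ (Fin 2) → ℝ |
        ∃ (a : EuclideanSpace ℝ (Fin 2)) (b : ℝ), f = fun x => φ ((inner ℝ a x : ℝ) + b)}) :
    RectP g := by
  induction hg using Submodule.span_induction with
  | mem x hx =>
      obtain ⟨a, b, rfl⟩ := hx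
      refine ⟨lval L₁ L₂ φ (a 1) (a 0) b, lval L₁ L₂ φ (-(a 1)) (a 0) b,
        lval L₁ L₂ φ (a 1) (-(a 0)) b, lval L₁ L₂ φ (-(a 1)) (-(a 0)) b,
        ?_, ?_, ?_, ?_, lval_rect L₁ L₂ φ (a 1) (a 0) b⟩
      · have := lval_tendsto L₁ L₂ φ hφ₁ hφ₂ (a 1) (a 0) b
        refine this.congr (fun t => ?_)
        simp [pth, inner_vec2, vec2_zero, vec2_one]
      · have := lval_tendsto L₁ L₂ φ hφ₁ hφ₂ (-(a 1)) (a 0) b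
        refine this.congr (fun t => ?_)
        simp [pth, inner_vec2, vec2_zero, vec2_one]
      · have := lval_tendsto L₁ L₂ φ hφ₁ hφ₂ (a 1) (-(a 0)) b
        refine this.congr (fun t => ?_)
        simp [pth, inner_vec2, vec2_zero, vec2_one]
      · have := lval_tendsto L₁ L₂ φ hφ₁ hφ₂ (-(a 1)) (-(a 0)) b
        refine this.congr (fun t => ?_)
        simp [pth, inner_vec2, vec2_zero, vec2_one]
  | zero => exact ⟨0, 0, 0, 0, tendsto_const_nhds, tendsto_const_nhds,
      tendsto_const_nhds, tendsto_const_nhds, by ring⟩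
  | add x y hx hy px py =>
      obtain ⟨A, B, C, D, h1, h2, h3, h4, h5⟩ := px
      obtain ⟨A', B', C', D', h1', h2', h3', h4', h5'⟩ := py
      exact ⟨A + A', B + B', C + C', D + D', h1.add h1', h2.add h2', h3.add h3',
        h4.add h4', by linarith⟩
  | smul c x hx px =>
      obtain ⟨A, B, C, D, h1, h2, h3, h4, h5⟩ := px
      exact ⟨c * A, c * B, c * C, c * D, h1.const_mul c, h2.const_mul c,
        h3.const_mul c, h4.const_mul c, by linear_combination c * h5⟩

/-- For `φ` continuous with distinct finite limits at `±∞`, the mollified AND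
function `f(x,y) = h(x)h(y)` is at uniform distance at least `1/4` from every
one-layer network on `ℝ²`. -/
theorem stmt18 (φ : ℝ → ℝ) (hφc : Continuous φ)
    (L₁ L₂ : ℝ) (hφ₁ : Tendsto φ atBot (𝓝 L₁)) (hφ₂ : Tendsto φ atTop (𝓝 L₂))
    (hne : L₁ ≠ L₂)
    (h : ℝ → ℝ) (hhc : Continuous h)
    (hh₁ : ∃ L : ℝ, Tendsto h atBot (𝓝 L)) (hh₂ : ∃ L : ℝ, Tendsto h atTop (𝓝 L))
    (hh0 : ∀ x : ℝ, x ≤ 0 → h x = 0) (hh1 : ∀ x : ℝ, 1 ≤ x → h x = 1)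
    (f : E 2 → ℝ) (hf : ∀ x : E 2, f x = h (x 0) * h (x 1)) :
    ∀ g ∈ NN φ 2 1,
      ENNReal.ofReal (1 / 4) ≤ ⨆ x : E 2, ENNReal.ofReal |f x - g x| := by
  intro g hg
  have hg' : g ∈ Submodule.span ℝ
      {f : E 2 → ℝ | ∃ (a : E 2) (b : ℝ), f = fun x => φ ((inner ℝ a x : ℝ) + b)} := by
    simpa [NN] using hg
  obtain ⟨A, B, C, D, h1, h2, h3, h4, h5⟩ := rectP_span φ L₁ L₂ hφ₁ hφ₂ g hg'
  have key : ∀ (i : Fin 4) (c G : ℝ), Tendsto (fun t => f (pth i t)) atTop (𝓝 c) →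
      Tendsto (fun t => g (pth i t)) atTop (𝓝 G) → 1/4 ≤ |c - G| →
      ENNReal.ofReal (1/4) ≤ ⨆ x : E 2, ENNReal.ofReal |f x - g x| := by
    intro i c G hc hG hle
    have ht : Tendsto (fun t => ENNReal.ofReal |f (pth i t) - g (pth i t)|) atTop
        (𝓝 (ENNReal.ofReal |c - G|)) :=
      (ENNReal.continuous_ofReal.tendsto _).comp ((hc.sub hG).abs)
    have hbd : ENNReal.ofReal |c - G| ≤ ⨆ x, ENNReal.ofReal |f x - g x| :=
      le_of_tendsto ht (Eventually.of_forall fun t =>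
        le_iSup (fun x => ENNReal.ofReal |f x - g x|) (pth i t))
    exact le_trans (ENNReal.ofReal_le_ofReal hle) hbd
  have hf1 : Tendsto (fun t => f (pth 0 t)) atTop (𝓝 1) := by
    apply tendsto_const_nhds.congr'
    filter_upwards [eventually_ge_atTop (1:ℝ)] with t ht
    simp [hf, pth, vec2_zero, vec2_one, hh1 t ht, hh1 (t^2) (by nlinarith)]
  have hf2 : Tendsto (fun t => f (pth 1 t)) atTop (𝓝 0) := by
    apply tendsto_const_nhds.congr
    intro t
    simp [hf, pth, vec2_zero, vec2_one, hh0 (-t^2) (by nlinarith)]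
  have hf3 : Tendsto (fun t => f (pth 2 t)) atTop (𝓝 0) := by
    apply tendsto_const_nhds.congr'
    filter_upwards [eventually_ge_atTop (0:ℝ)] with t ht
    simp [hf, pth, vec2_zero, vec2_one, hh0 (-t) (by linarith)]
  have hf4 : Tendsto (fun t => f (pth 3 t)) atTop (𝓝 0) := by
    apply tendsto_const_nhds.congr'
    filter_upwards [eventually_ge_atTop (0:ℝ)] with t ht
    simp [hf, pth, vec2_zero, vec2_one, hh0 (-t) (by linarith)]
  have hcase : 1/4 ≤ |1 - A| ∨ 1/4 ≤ |(0:ℝ) - B| ∨ 1/4 ≤ |(0:ℝ) - C| ∨ 1/4 ≤ |(0:ℝ) - D| := by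
    by_contra hcon
    push_neg at hcon
    obtain ⟨e1, e2, e3, e4⟩ := hcon
    have b1 := abs_lt.mp e1
    have b2 := abs_lt.mp e2
    have b3 := abs_lt.mp e3
    have b4 := abs_lt.mp e4
    linarith [b1.1, b1.2, b2.1, b2.2, b3.1, b3.2, b4.1, b4.2]
  rcases hcase with hc | hc | hc | hc
  · exact key 0 1 A hf1 h1 hc
  · exact key 1 0 B hf2 h2 hc
  · exact key 2 0 C hf3 h3 hc
  · exact key 3 0 D hf4 h4 hc
end
end

section
/- Let m ∈ ℕ and n ∈ ℕ with n ≥ 2, let a₁, …, a_m ∈ ℝⁿ, and let f₁, …, f_m : ℝ → ℝ be arbitrary functions. Define f : ℝⁿ → ℝ by f(x) := ∑_{j=1}^m f_j(a_j·x). If f is continuous and vanishes at infinity (i.e., f ∈ C₀(ℝⁿ)), then f = 0. In particular, for every function φ : ℝ → ℝ, N¹_φ(ℝⁿ) ∩ C₀(ℝⁿ) = {0}. -/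
open Filter Topology MeasureTheory

noncomputable section

/-- Existence of a nonzero vector orthogonal to a given one (needs `n ≥ 2`). -/
lemma exists_orth (n : ℕ) (hn : 2 ≤ n) (a : E n) :
    ∃ w : E n, w ≠ 0 ∧ (inner ℝ a w : ℝ) = 0 := by
  have hne : ((ℝ ∙ a)ᗮ : Submodule ℝ (E n)) ≠ ⊥ := by
    intro h
    have h1 := (ℝ ∙ a).finrank_add_finrank_orthogonal
    rw [h, finrank_bot] at h1
    have h2 : Module.finrank ℝ (ℝ ∙ a) ≤ 1 := by
      rcases eq_or_ne a 0 with rfl | ha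
      · rw [Submodule.span_zero_singleton]; simp
      · rw [finrank_span_singleton ha]
    have h3 : Module.finrank ℝ (E n) = n := by simp
    omega
  obtain ⟨w, hw, hw0⟩ := Submodule.exists_mem_ne_zero_of_ne_bot hne
  exact ⟨w, hw0, (Submodule.mem_orthogonal _ _).1 hw a (Submodule.mem_span_singleton_self a)⟩

/-- A line tends to the cocompact filter. -/
lemma line_cocompact (n : ℕ) (x w : E n) (hw : w ≠ 0) :
    Tendsto (fun s : ℝ => x + s • w) atTop (cocompact (E n)) := by
  rw [← Metric.cobounded_eq_cocompact, ← tendsto_norm_atTop_iff_cobounded]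
  apply tendsto_atTop_mono' _ (_ : ∀ᶠ s : ℝ in atTop, s * ‖w‖ - ‖x‖ ≤ ‖x + s • w‖)
  · exact tendsto_atTop_add_const_right _ _ (Tendsto.atTop_mul_const (norm_pos_iff.2 hw) tendsto_id)
  · filter_upwards [eventually_ge_atTop (0:ℝ)] with s hs
    calc s * ‖w‖ - ‖x‖ = ‖s • w‖ - ‖x‖ := by rw [norm_smul, Real.norm_of_nonneg hs]
    _ ≤ ‖x + s • w‖ := by
        have := norm_sub_le (x + s • w) x
        simpa using this

/-- Key lemma: a sum of ridge functions in `C₀` vanishes. -/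
lemma ridge_key (n : ℕ) (hn : 2 ≤ n) :
    ∀ (m : ℕ) (a : Fin m → E n) (F : Fin m → ℝ → ℝ),
      (fun x : E n => ∑ j, F j (inner ℝ (a j) x : ℝ)) ∈ C0 n →
      (fun x : E n => ∑ j, F j (inner ℝ (a j) x : ℝ)) = 0 := by
  intro m
  induction m with
  | zero => intro a F _; funext x; simp
  | succ m ih =>
    intro a F hf
    obtain ⟨hc, h0⟩ := hf
    set f : E n → ℝ := fun x : E n => ∑ j, F j (inner ℝ (a j) x : ℝ) with hfdef
    have hinv : ∀ v : E n, (inner ℝ (a (Fin.last m)) v : ℝ) = 0 → ∀ x, f (x + v) = f x := by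
      intro v hv
      set G : Fin m → ℝ → ℝ :=
        fun j t => F j.castSucc (t + (inner ℝ (a j.castSucc) v : ℝ)) - F j.castSucc t with hG
      have hg : (fun x : E n => ∑ j, G j (inner ℝ (a j.castSucc) x : ℝ)) =
          fun x => f (x + v) - f x := by
        funext x
        simp only [hG, hfdef]
        rw [Fin.sum_univ_castSucc (fun j => F j (inner ℝ (a j) (x + v) : ℝ)),
            Fin.sum_univ_castSucc (fun j => F j (inner ℝ (a j) x : ℝ)),
            Finset.sum_sub_distrib]
        have hlast : (inner ℝ (a (Fin.last m)) (x + v) : ℝ) = inner ℝ (a (Fin.last m)) x := by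
          rw [inner_add_right, hv, add_zero]
        rw [hlast]
        simp only [inner_add_right]
        ring
      have hgC0 : (fun x : E n => ∑ j, G j (inner ℝ ((fun j : Fin m => a j.castSucc) j) x : ℝ)) ∈ C0 n := by
        constructor
        · rw [hg]
          exact (hc.comp (continuous_id.add continuous_const)).sub hc
        · rw [hg]
          have htr : Tendsto (fun x : E n => x + v) (cocompact (E n)) (cocompact (E n)) :=
            (Homeomorph.addRight v).map_cocompact.le
          have := (h0.comp htr).sub h0
          simpa using this
      have := ih (fun j => a j.castSucc) G hgC0
      rw [hg] at this
      intro x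
      have := congrFun this x
      simpa [sub_eq_zero] using this
    funext x
    obtain ⟨w, hw0, hworth⟩ := exists_orth n hn (a (Fin.last m))
    have hconst : ∀ s : ℝ, f (x + s • w) = f x := by
      intro s
      exact hinv (s • w) (by rw [inner_smul_right, hworth, mul_zero]) x
    have hlim : Tendsto (fun s : ℝ => f (x + s • w)) atTop (𝓝 0) :=
      h0.comp (line_cocompact n x w hw0)
    have : Tendsto (fun _ : ℝ => f x) atTop (𝓝 0) := by
      simpa [hconst] using hlim
    have := tendsto_nhds_unique this tendsto_const_nhds
    simpa using this.symm

/-- For `n ≥ 2`, a finite sum of ridge functions `x ↦ ∑ⱼ fⱼ(aⱼ·x)` that is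
continuous and vanishes at infinity must be zero; in particular
`N¹_φ(ℝⁿ) ∩ C₀(ℝⁿ) = {0}` for every `φ`. -/
theorem stmt19 (n : ℕ) (hn : 2 ≤ n) :
    (∀ (m : ℕ), 1 ≤ m → ∀ (a : Fin m → E n) (F : Fin m → ℝ → ℝ),
      (fun x : E n => ∑ j, F j (inner ℝ (a j) x : ℝ)) ∈ C0 n →
      (fun x : E n => ∑ j, F j (inner ℝ (a j) x : ℝ)) = 0) ∧
    (∀ φ : ℝ → ℝ, NN φ n 1 ∩ C0 n = {(0 : E n → ℝ)}) := by
  constructor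
  · intro m _ a F hf
    exact ridge_key n hn m a F hf
  · intro φ
    ext f
    simp only [Set.mem_inter_iff, Set.mem_singleton_iff]
    constructor
    · rintro ⟨hspan, hC0⟩
      have hrep : ∀ g : E n → ℝ, g ∈ Submodule.span ℝ
          {g : E n → ℝ | ∃ (a : E n) (b : ℝ), g = fun x => φ ((inner ℝ a x : ℝ) + b)} →
          ∃ (m : ℕ) (a : Fin m → E n) (F : Fin m → ℝ → ℝ),
          g = fun x : E n => ∑ j, F j (inner ℝ (a j) x : ℝ) := by
        intro g hg
        induction hg using Submodule.span_induction with
        | mem g hg =>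
          obtain ⟨a, b, rfl⟩ := hg
          exact ⟨1, fun _ => a, fun _ t => φ (t + b), by funext x; simp⟩
        | zero => exact ⟨0, Fin.elim0, Fin.elim0, by funext x; simp⟩
        | add g h _ _ ihg ihh =>
          obtain ⟨m₁, a₁, F₁, rfl⟩ := ihg
          obtain ⟨m₂, a₂, F₂, rfl⟩ := ihh
          refine ⟨m₁ + m₂, Fin.append a₁ a₂, Fin.append F₁ F₂, ?_⟩
          funext x
          simp [Fin.sum_univ_add, Fin.append_left, Fin.append_right]
        | smul c g _ ihg =>
          obtain ⟨m, a, F, rfl⟩ := ihg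
          refine ⟨m, a, fun j t => c * F j t, ?_⟩
          funext x
          simp [Finset.mul_sum]
      obtain ⟨m, a, F, rfl⟩ := hrep f hspan
      exact ridge_key n hn m a F hC0
    · rintro rfl
      refine ⟨?_, ?_, ?_⟩
      · exact (Submodule.span ℝ _).zero_mem
      · exact continuous_const
      · exact tendsto_const_nhds
end
end
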